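/- Let u and v be positive integers with v ≤ u. Every bipartite simple graph whose two vertex classes have sizes u and v and which contains no cycle of length 6 has fewer than 2u + v²/2 edges. -/

import Mathlib

open Finset

set_option linter.unusedSectionVars false
set_option maxHeartbeats 1000000

namespace GyoriCore

variable {α β : Type*} [Fintype α] [DecidableEq α] [Fintype β] [DecidableEq β]

/-- rainbow-triangle-free -/
def RTF (S : α → Finset β) : Prop :=
  ∀ a1 a2 a3 : α, ∀ b1 b2 b3 : β, a1 ≠ a2 → a1 ≠ a3 → a2 ≠ a3 →
    b1 ≠ b2 → b1 ≠ b3 → b2 ≠ b3 →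
    b1 ∈ S a1 → b1 ∈ S a2 → b2 ∈ S a2 → b2 ∈ S a3 → b3 ∈ S a3 → b3 ∈ S a1 → False

variable (S : α → Finset β)

def DD : Finset α := univ.filter (fun a => 3 ≤ (S a).card)

def bk (p : Finset β) : Finset α := (DD S).filter (fun a => p ⊆ S a)

def mm (p : Finset β) : ℕ := (bk S p).card

def priv (p : Finset β) : Finset β := ((bk S p).biUnion S) \ p

variable {S}

lemma bk_subs {p : Finset β} {a : α} (h : a ∈ bk S p) : p ⊆ S a :=
  (mem_filter.mp h).2

lemma bk_dd {p : Finset β} {a : α} (h : a ∈ bk S p) : a ∈ DD S :=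
  (mem_filter.mp h).1

lemma bk_big {p : Finset β} {a : α} (h : a ∈ bk S p) : 3 ≤ (S a).card :=
  (mem_filter.mp (bk_dd h)).2

/-- find a third member of a heavy book -/
lemma third {p : Finset β} (hm : 3 ≤ mm S p) (a1 a2 : α) :
    ∃ a3 ∈ bk S p, a3 ≠ a1 ∧ a3 ≠ a2 := by
  have hns : ¬ bk S p ⊆ {a1, a2} := by
    intro h
    have h1 := Finset.card_le_card h
    have h2 : ({a1, a2} : Finset α).card ≤ 2 := by
      refine (Finset.card_insert_le _ _).trans ?_
      simp
    unfold mm at hm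
    omega
  obtain ⟨a3, h3, h3n⟩ := Finset.not_subset.mp hns
  simp only [mem_insert, mem_singleton, not_or] at h3n
  exact ⟨a3, h3, h3n⟩

/-- Book lemma: if a pair is heavy, sets containing it pairwise intersect in exactly the pair. -/
lemma book (hR : RTF S) {p : Finset β} (hp : p.card = 2) (hm : 3 ≤ mm S p)
    {a1 a2 : α} (h1 : a1 ∈ bk S p) (h2 : a2 ∈ bk S p) (hne : a1 ≠ a2) :
    S a1 ∩ S a2 = p := by
  apply Finset.Subset.antisymm
  · intro c hc
    by_contra hcp
    obtain ⟨a3, ha3, hne1, hne2⟩ := third hm a1 a2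
    obtain ⟨x, y, hxy, rfl⟩ := Finset.card_eq_two.mp hp
    have hx1 : x ∈ S a1 := bk_subs h1 (by simp)
    have hx3 : x ∈ S a3 := bk_subs ha3 (by simp)
    have hy2 : y ∈ S a2 := bk_subs h2 (by simp)
    have hy3 : y ∈ S a3 := bk_subs ha3 (by simp)
    rw [mem_inter] at hc
    have hcx : c ≠ x := fun h => hcp (by simp [h])
    have hcy : c ≠ y := fun h => hcp (by simp [h])
    exact hR a1 a2 a3 c y x hne hne1.symm hne2.symm hcy hcx (Ne.symm hxy)
      hc.1 hc.2 hy2 hy3 hx3 hx1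
  · exact Finset.subset_inter (bk_subs h1) (bk_subs h2)

/-- Lemma 2: a pair consisting of a vertex of a heavy pair `p` and a private vertex of a
book member belongs to exactly one set of the family. -/
lemma unique_holder (hR : RTF S) {p : Finset β} (hp : p.card = 2) (hm : 3 ≤ mm S p)
    {a : α} (ha : a ∈ bk S p) {z c : β} (hz : z ∈ p) (hc : c ∈ S a \ p) :
    (DD S).filter (fun a' => z ∈ S a' ∧ c ∈ S a') = {a} := by
  rw [mem_sdiff] at hc
  apply Finset.Subset.antisymm
  · intro a' ha'
    rw [mem_filter] at ha'
    obtain ⟨haD, hza', hca'⟩ := ha'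
    rw [mem_singleton]
    by_contra hne
    by_cases hsub : p ⊆ S a'
    · have : a' ∈ bk S p := mem_filter.mpr ⟨haD, hsub⟩
      have := book hR hp hm this ha hne
      have : c ∈ p := by rw [← this]; exact mem_inter.mpr ⟨hca', hc.1⟩
      exact hc.2 this
    · -- some element w of p not in S a'
      obtain ⟨w, hwp, hwa'⟩ := Finset.not_subset.mp hsub
      have hwz : w ≠ z := fun h => hwa' (h ▸ hza')
      obtain ⟨aj, haj, hj1, hj2⟩ := third hm a a'
      have hwj : w ∈ S aj := bk_subs haj hwp
      have hzj : z ∈ S aj := bk_subs haj hz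
      have hwa : w ∈ S a := bk_subs ha hwp
      have hcz : c ≠ z := fun h => hc.2 (h ▸ hz)
      have hcw : c ≠ w := fun h => hc.2 (h ▸ hwp)
      -- rainbow on (a', a, aj) with reps c, w, z
      exact hR a' a aj c w z hne hj2.symm.symm.symm (by exact fun h => hj1 h.symm) hcw hcz hwz
        hca' hc.1 hwa hwj hzj hza'
  · intro x hx
    rw [mem_singleton] at hx
    subst hx
    exact mem_filter.mpr ⟨bk_dd ha, bk_subs ha hz, hc.1⟩

/-- Lemma 3: two heavy pairs inside a common set sharing a vertex are equal. -/
lemma heavy_unique (hR : RTF S) {p p' : Finset β} (hp : p.card = 2) (hp' : p'.card = 2)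
    (hm : 3 ≤ mm S p) (hm' : 3 ≤ mm S p')
    {a0 : α} (h0 : a0 ∈ bk S p) (h0' : a0 ∈ bk S p')
    {z : β} (hz : z ∈ p) (hz' : z ∈ p') : p = p' := by
  by_contra hne
  obtain ⟨x, y, hxy, rfl⟩ := Finset.card_eq_two.mp hp
  obtain ⟨x', y', hxy', rfl⟩ := Finset.card_eq_two.mp hp'
  have key : ∀ w w' : β, w ∈ ({x,y} : Finset β) → w' ∈ ({x',y'} : Finset β) →
      w ≠ z → w' ≠ z → w ≠ w' → False := by
    intro w w' hw hw' hwz hw'z hww'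
    obtain ⟨aj, haj, hj0, _⟩ := third hm a0 a0
    obtain ⟨ak, hak, hk0, _⟩ := third hm' a0 a0
    have hjk : aj ≠ ak := by
      intro h
      apply hne
      have e1 := book hR hp hm haj h0 hj0
      have e2 := book hR hp' hm' hak h0' hk0
      rw [← e1, ← e2, h]
    exact hR aj a0 ak w w' z hj0 hjk hk0.symm hww' hwz hw'z
      (bk_subs haj hw) (bk_subs h0 hw) (bk_subs h0' hw') (bk_subs hak hw')
      (bk_subs hak hz') (bk_subs haj hz)
  rcases mem_insert.mp hz with rfl | hz2
  · rcases mem_insert.mp hz' with h | h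
    · subst h
      by_cases hyy : y = y'
      · exact hne (by rw [hyy])
      · exact key y y' (by simp) (by simp) (Ne.symm hxy) (Ne.symm hxy') hyy
    · rw [mem_singleton] at h; subst h
      by_cases hyy : y = x'
      · exact hne (by rw [hyy]; exact Finset.pair_comm _ _)
      · exact key y x' (by simp) (by simp) (Ne.symm hxy) hxy' hyy
  · rw [mem_singleton] at hz2; subst hz2
    rcases mem_insert.mp hz' with h | h
    · subst h
      by_cases hyy : x = y'
      · exact hne (by rw [hyy]; exact Finset.pair_comm _ _)
      · exact key x y' (by simp) (by simp) hxy (Ne.symm hxy') hyy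
    · rw [mem_singleton] at h; subst h
      by_cases hyy : x = x'
      · exact hne (by rw [hyy])
      · exact key x x' (by simp) (by simp) hxy hxy' hyy

/-- the set of all pairs of `β` -/
def prs : Finset (Finset β) := (univ : Finset β).powersetCard 2

lemma mem_prs {q : Finset β} : q ∈ (prs : Finset (Finset β)) ↔ q.card = 2 := by
  simp [prs, Finset.mem_powersetCard, Finset.subset_univ]

lemma prs_card : (prs : Finset (Finset β)).card = (Fintype.card β).choose 2 := by
  simp [prs, Finset.card_powersetCard]

variable (S) in
lemma double_count :
    ∑ a ∈ DD S, (S a).card.choose 2 = ∑ q ∈ (prs : Finset (Finset β)), mm S q := by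
  have h1 : ∀ a : α, (S a).card.choose 2 = ((prs : Finset (Finset β)).filter
      (fun q => q ⊆ S a)).card := by
    intro a
    rw [← Finset.card_powersetCard]
    congr 1
    ext q
    simp only [Finset.mem_powersetCard, mem_filter, mem_prs]
    constructor
    · rintro ⟨h, h2⟩; exact ⟨h2, h⟩
    · rintro ⟨h2, h⟩; exact ⟨h, h2⟩
  calc ∑ a ∈ DD S, (S a).card.choose 2
      = ∑ a ∈ DD S, ∑ q ∈ (prs : Finset (Finset β)), if q ⊆ S a then 1 else 0 := by
        refine Finset.sum_congr rfl fun a _ => ?_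
        rw [h1 a, Finset.card_filter]
    _ = ∑ q ∈ (prs : Finset (Finset β)), ∑ a ∈ DD S, if q ⊆ S a then 1 else 0 :=
        Finset.sum_comm
    _ = ∑ q ∈ (prs : Finset (Finset β)), mm S q := by
        refine Finset.sum_congr rfl fun q _ => ?_
        rw [mm, bk, Finset.card_filter]

lemma mm_le_card_priv (hR : RTF S) {p : Finset β} (hp : p.card = 2) (hm : 3 ≤ mm S p) :
    mm S p ≤ (priv S p).card := by
  have hne : ∀ a ∈ bk S p, (S a \ p).Nonempty := by
    intro a ha
    rw [← Finset.card_pos, Finset.card_sdiff_of_subset (bk_subs ha)]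
    have := bk_big ha
    omega
  obtain ⟨a0, ha0⟩ : (bk S p).Nonempty := Finset.card_pos.mp (by unfold mm at hm; omega)
  classical
  set f : α → β := fun a => if h : a ∈ bk S p then (hne a h).choose else (hne a0 ha0).choose with hf
  have hfmem : ∀ a (h : a ∈ bk S p), f a ∈ S a \ p := by
    intro a h
    simp only [hf, dif_pos h]
    exact (hne a h).choose_spec
  refine Finset.card_le_card_of_injOn f ?_ ?_
  · intro a ha
    have := hfmem a ha
    rw [mem_sdiff] at this
    rw [Finset.mem_coe, priv, mem_sdiff]
    exact ⟨Finset.mem_biUnion.mpr ⟨a, ha, this.1⟩, this.2⟩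
  · intro a ha b hb hab
    rw [Finset.mem_coe] at ha hb
    by_contra hne2
    have h1 := hfmem a ha
    have h2 := hfmem b hb
    rw [hab] at h1
    have : f b ∈ S a ∩ S b := by
      rw [mem_sdiff] at h1 h2
      exact mem_inter.mpr ⟨h1.1, h2.1⟩
    rw [book hR hp hm ha hb hne2] at this
    rw [mem_sdiff] at h2
    exact h2.2 this

lemma sum_heavy_le (hR : RTF S) :
    ∑ p ∈ ((prs : Finset (Finset β)).filter (fun p => 3 ≤ mm S p)), mm S p ≤
      ((prs : Finset (Finset β)).filter (fun q => mm S q = 1)).card := by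
  classical
  set H := (prs : Finset (Finset β)).filter (fun p => 3 ≤ mm S p) with hH
  set L1 := (prs : Finset (Finset β)).filter (fun q => mm S q = 1) with hL1
  set U := H.sigma (fun p => p ×ˢ priv S p) with hUdef
  set Φ : (Σ _ : Finset β, β × β) → Finset β := fun x => {x.2.1, x.2.2} with hΦ
  have hmaps : ∀ x ∈ U, Φ x ∈ L1 := by
    intro x hx
    obtain ⟨p, z, c⟩ := x
    rw [hUdef, Finset.mem_sigma, Finset.mem_product] at hx
    obtain ⟨hpH, hz, hc⟩ := hx
    rw [hH, mem_filter] at hpH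
    have hp2 : p.card = 2 := mem_prs.mp hpH.1
    have hm : 3 ≤ mm S p := hpH.2
    rw [priv, mem_sdiff, Finset.mem_biUnion] at hc
    obtain ⟨⟨a, ha, hca⟩, hcp⟩ := hc
    have hzc : z ≠ c := fun h => hcp (h ▸ hz)
    have huniq := unique_holder hR hp2 hm ha hz (mem_sdiff.mpr ⟨hca, hcp⟩)
    have hbkq : bk S ({z, c} : Finset β) = {a} := by
      rw [← huniq, bk]
      refine Finset.filter_congr fun a' _ => ?_
      simp [Finset.insert_subset_iff]
    rw [hL1, mem_filter]
    constructor
    · rw [mem_prs]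
      exact Finset.card_pair hzc
    · rw [mm, hbkq, Finset.card_singleton]
  have hfib : ∀ q ∈ L1, (U.filter (fun x => Φ x = q)).card ≤ 2 := by
    intro q hq
    rw [hL1, mem_filter] at hq
    have hq2 : q.card = 2 := mem_prs.mp hq.1
    have hmq : mm S q = 1 := hq.2
    obtain ⟨a0, ha0⟩ := Finset.card_eq_one.mp hmq
    have hle : (U.filter (fun x => Φ x = q)).card ≤ q.card := by
      refine Finset.card_le_card_of_injOn (fun x => x.2.1) ?_ ?_
      · intro x hx
        rw [Finset.mem_coe, mem_filter] at hx
        rw [← hx.2, hΦ]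
        exact Finset.mem_insert_self _ _
      · intro x hx y hy hxy
        rw [Finset.mem_coe, mem_filter] at hx hy
        obtain ⟨hxU, hxq⟩ := hx
        obtain ⟨hyU, hyq⟩ := hy
        obtain ⟨p, z, c⟩ := x
        obtain ⟨p', z', c'⟩ := y
        simp only at hxy
        subst hxy
        rw [hUdef, Finset.mem_sigma, Finset.mem_product] at hxU hyU
        obtain ⟨hpH, hz, hc⟩ := hxU
        obtain ⟨hpH', hz', hc'⟩ := hyU
        rw [hH, mem_filter] at hpH hpH'
        have hp2 : p.card = 2 := mem_prs.mp hpH.1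
        have hp2' : p'.card = 2 := mem_prs.mp hpH'.1
        rw [priv, mem_sdiff, Finset.mem_biUnion] at hc hc'
        obtain ⟨⟨a, ha, hca⟩, hcp⟩ := hc
        obtain ⟨⟨a', ha', hca'⟩, hcp'⟩ := hc'
        have hzc : z ≠ c := fun h => hcp (h ▸ hz)
        have hzc' : z ≠ c' := fun h => hcp' (h ▸ hz')
        have hcc : c' = c := by
          have : c' ∈ ({z, c} : Finset β) := by
            rw [hΦ] at hxq hyq
            simp only at hxq hyq
            rw [hxq, ← hyq]
            exact Finset.mem_insert_of_mem (Finset.mem_singleton_self _)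
          rcases Finset.mem_insert.mp this with h | h
          · exact absurd h.symm hzc'
          · exact Finset.mem_singleton.mp h
        subst hcc
        have haq : a ∈ bk S q := by
          rw [bk, mem_filter]
          refine ⟨bk_dd ha, ?_⟩
          rw [hΦ] at hxq
          simp only at hxq
          rw [← hxq]
          rw [Finset.insert_subset_iff, Finset.singleton_subset_iff]
          exact ⟨bk_subs ha hz, hca⟩
        have haq' : a' ∈ bk S q := by
          rw [bk, mem_filter]
          refine ⟨bk_dd ha', ?_⟩
          rw [hΦ] at hyq
          simp only at hyq
          rw [← hyq]
          rw [Finset.insert_subset_iff, Finset.singleton_subset_iff]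
          exact ⟨bk_subs ha' hz', hca'⟩
        rw [ha0, Finset.mem_singleton] at haq haq'
        subst haq
        subst haq'
        have hpp : p = p' := heavy_unique hR hp2 hp2' hpH.2 hpH'.2 ha ha' hz hz'
        subst hpp
        rfl
    omega
  have hUcard : U.card ≤ 2 * L1.card :=
    Finset.card_le_mul_card_image_of_maps_to hmaps 2 hfib
  have hU2 : ∑ p ∈ H, 2 * mm S p ≤ U.card := by
    rw [hUdef, Finset.card_sigma]
    refine Finset.sum_le_sum fun p hp => ?_
    rw [hH, mem_filter] at hp
    rw [Finset.card_product, mem_prs.mp hp.1]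
    exact Nat.mul_le_mul_left 2 (mm_le_card_priv hR (mem_prs.mp hp.1) hp.2)
  have : 2 * ∑ p ∈ H, mm S p ≤ 2 * L1.card := by
    rw [Finset.mul_sum]
    exact hU2.trans hUcard
  omega

lemma sum_le_two_card {γ : Type*} (s : Finset γ) (f : γ → ℕ) (h : ∀ x ∈ s, f x ≤ 2) :
    ∑ x ∈ s, f x ≤ 2 * s.card := by
  calc ∑ x ∈ s, f x ≤ ∑ _x ∈ s, 2 := Finset.sum_le_sum h
    _ = 2 * s.card := by rw [Finset.sum_const, smul_eq_mul, Nat.mul_comm]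

variable (S) in
theorem core_bound (hR : RTF S) :
    ∑ a, (S a).card ≤ 2 * Fintype.card α + (Fintype.card β).choose 2 := by
  classical
  have hsum3 : ∑ q ∈ (prs : Finset (Finset β)), mm S q ≤ 3 * (prs : Finset (Finset β)).card := by
    rw [← Finset.sum_filter_add_sum_filter_not (prs : Finset (Finset β)) (fun q => 3 ≤ mm S q)]
    have h1 : ∑ q ∈ (prs : Finset (Finset β)).filter (fun q => ¬ 3 ≤ mm S q), mm S q ≤
        2 * ((prs : Finset (Finset β)).filter (fun q => ¬ 3 ≤ mm S q)).card :=
      sum_le_two_card _ _ (fun q hq => by have := (mem_filter.mp hq).2; omega)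
    have h2 := sum_heavy_le hR
    have h3 : ((prs : Finset (Finset β)).filter (fun q => mm S q = 1)).card ≤
        (prs : Finset (Finset β)).card := Finset.card_le_card (Finset.filter_subset _ _)
    have h4 : ((prs : Finset (Finset β)).filter (fun q => ¬ 3 ≤ mm S q)).card ≤
        (prs : Finset (Finset β)).card := Finset.card_le_card (Finset.filter_subset _ _)
    omega
  have hstep : 3 * ∑ a ∈ DD S, ((S a).card - 2) ≤ ∑ q ∈ (prs : Finset (Finset β)), mm S q := by
    rw [← double_count S, Finset.mul_sum]
    refine Finset.sum_le_sum fun a ha => ?_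
    have h3 : 3 ≤ (S a).card := (mem_filter.mp ha).2
    obtain ⟨m, hmeq⟩ : ∃ m, (S a).card = m + 3 := ⟨(S a).card - 3, by omega⟩
    rw [hmeq, Nat.choose_two_right]
    rw [Nat.le_div_iff_mul_le (by norm_num)]
    rw [show m + 3 - 2 = m + 1 from rfl, show m + 3 - 1 = m + 2 from rfl]
    nlinarith [sq_nonneg m]
  have hA : ∑ a ∈ DD S, ((S a).card - 2) ≤ (prs : Finset (Finset β)).card := by omega
  have hDDsum : ∑ a ∈ DD S, (S a).card = (∑ a ∈ DD S, ((S a).card - 2)) + 2 * (DD S).card := by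
    have : ∀ a ∈ DD S, (S a).card = ((S a).card - 2) + 2 := by
      intro a ha
      have := (mem_filter.mp ha).2
      omega
    rw [Finset.sum_congr rfl this, Finset.sum_add_distrib, Finset.sum_const, smul_eq_mul,
      Nat.mul_comm]
  set F := (univ : Finset α).filter (fun a => ¬ 3 ≤ (S a).card) with hF
  have hDDdef : DD S = (univ : Finset α).filter (fun a => 3 ≤ (S a).card) := rfl
  have hnot : ∑ a ∈ F, (S a).card ≤ 2 * F.card :=
    sum_le_two_card _ _ (fun a ha => by have := (mem_filter.mp ha).2; omega)
  have hcards : (DD S).card + F.card = Fintype.card α := by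
    rw [hDDdef, hF, Finset.card_filter_add_card_filter_not, Finset.card_univ]
  have hgoalsplit : ∑ a, (S a).card = ∑ a ∈ DD S, (S a).card + ∑ a ∈ F, (S a).card := by
    rw [hDDdef, hF]
    exact (Finset.sum_filter_add_sum_filter_not _ _ _).symm
  rw [hgoalsplit, hDDsum]
  rw [prs_card] at hA
  omega

end GyoriCore


open Sum

/-- A simple graph contains no cycle of length 6. -/
def C6Free {V : Type*} (G : SimpleGraph V) : Prop :=
  ∀ (v : V) (w : G.Walk v v), w.IsCycle → w.length ≠ 6

private lemma rainbow_c6 {u v : ℕ} (G : SimpleGraph (Fin u ⊕ Fin v)) (hC6 : C6Free G)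
    {a1 a2 a3 : Fin u} {b1 b2 b3 : Fin v}
    (ha12 : a1 ≠ a2) (ha13 : a1 ≠ a3) (ha23 : a2 ≠ a3)
    (hb12 : b1 ≠ b2) (hb13 : b1 ≠ b3) (hb23 : b2 ≠ b3)
    (e11 : G.Adj (inl a1) (inr b1)) (e21 : G.Adj (inl a2) (inr b1))
    (e22 : G.Adj (inl a2) (inr b2)) (e32 : G.Adj (inl a3) (inr b2))
    (e33 : G.Adj (inl a3) (inr b3)) (e13 : G.Adj (inl a1) (inr b3)) : False := by
  let P : G.Walk (inr b1) (inl a1) :=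
    SimpleGraph.Walk.cons e21.symm (SimpleGraph.Walk.cons e22
      (SimpleGraph.Walk.cons e32.symm (SimpleGraph.Walk.cons e33
        (SimpleGraph.Walk.cons e13.symm SimpleGraph.Walk.nil))))
  let w : G.Walk (inl a1) (inl a1) := SimpleGraph.Walk.cons e11 P
  apply hC6 _ w
  · rw [SimpleGraph.Walk.cons_isCycle_iff]
    constructor
    · rw [SimpleGraph.Walk.isPath_def]
      simp only [P, SimpleGraph.Walk.support_cons, SimpleGraph.Walk.support_nil,
        List.nodup_cons, List.mem_cons, List.mem_singleton, List.not_mem_nil, or_false,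
        List.nodup_nil, and_true, not_or]
      refine ⟨⟨?_,?_,?_,?_,?_⟩,⟨?_,?_,?_,?_⟩,⟨?_,?_,?_⟩,⟨?_,?_⟩,?_⟩ <;> simp_all [eq_comm]
    · simp only [P, SimpleGraph.Walk.edges_cons, SimpleGraph.Walk.edges_nil,
        List.mem_cons, List.not_mem_nil, or_false]
      push_neg
      refine ⟨?_,?_,?_,?_,?_⟩ <;>
        · intro h
          rw [Sym2.eq, Sym2.rel_iff'] at h
          rcases h with h | h <;> simp_all [eq_comm]
  · simp [w, P, SimpleGraph.Walk.length_cons]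

/-- Every `C₆`-free bipartite simple graph with vertex classes of sizes `u` and `v`, where
`v ≤ u`, has fewer than `2u + v²/2` edges. -/
theorem ex_C6_bipartite_gyori (u v : ℕ) (hu : 0 < u) (hv : 0 < v) (hvu : v ≤ u)
    (G : SimpleGraph (Fin u ⊕ Fin v))
    (hbipL : ∀ a b : Fin u, ¬ G.Adj (Sum.inl a) (Sum.inl b))
    (hbipR : ∀ a b : Fin v, ¬ G.Adj (Sum.inr a) (Sum.inr b))
    (hC6 : C6Free G) :
    (G.edgeSet.ncard : ℝ) < 2 * (u : ℝ) + (v : ℝ) ^ 2 / 2 := by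
  classical
  set S : Fin u → Finset (Fin v) := fun a => univ.filter (fun b => G.Adj (inl a) (inr b)) with hS
  have hmemS : ∀ a b, b ∈ S a ↔ G.Adj (inl a) (inr b) := by intro a b; simp [hS]
  have hRTF : ∀ a1 a2 a3 : Fin u, ∀ b1 b2 b3 : Fin v, a1 ≠ a2 → a1 ≠ a3 → a2 ≠ a3 →
      b1 ≠ b2 → b1 ≠ b3 → b2 ≠ b3 →
      b1 ∈ S a1 → b1 ∈ S a2 → b2 ∈ S a2 → b2 ∈ S a3 → b3 ∈ S a3 → b3 ∈ S a1 → False := by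
    intro a1 a2 a3 b1 b2 b3 ha12 ha13 ha23 hb12 hb13 hb23 h1 h2 h3 h4 h5 h6
    exact rainbow_c6 G hC6 ha12 ha13 ha23 hb12 hb13 hb23 ((hmemS _ _).mp h1) ((hmemS _ _).mp h2)
      ((hmemS _ _).mp h3) ((hmemS _ _).mp h4) ((hmemS _ _).mp h5) ((hmemS _ _).mp h6)
  set P : Finset (Fin u × Fin v) := univ.filter (fun x => G.Adj (inl x.1) (inr x.2)) with hP
  set E : Finset (Sym2 (Fin u ⊕ Fin v)) := P.image (fun x => s(inl x.1, inr x.2)) with hE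
  have hedge : G.edgeSet = ↑E := by
    ext e
    induction e using Sym2.ind with
    | _ x y =>
      simp only [SimpleGraph.mem_edgeSet, hE, Finset.coe_image, Set.mem_image, Finset.mem_coe,
        hP, mem_filter, mem_univ, true_and]
      constructor
      · intro hadj
        cases x with
        | inl a =>
          cases y with
          | inl a' => exact absurd hadj (hbipL a a')
          | inr b => exact ⟨(a, b), hadj, rfl⟩
        | inr b =>
          cases y with
          | inl a => exact ⟨(a, b), hadj.symm, Sym2.eq_swap⟩
          | inr b' => exact absurd hadj (hbipR b b')
      · rintro ⟨⟨a, b⟩, hadj, heq⟩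
        have : s(x, y) ∈ G.edgeSet := heq ▸ (SimpleGraph.mem_edgeSet G).mpr hadj
        exact this
  have hcard1 : G.edgeSet.ncard = E.card := by rw [hedge, Set.ncard_coe_finset]
  have hinj : Set.InjOn (fun x : Fin u × Fin v => s(inl x.1, inr x.2)) ↑P := by
    intro x _ y _ h
    rw [Sym2.eq_iff] at h
    rcases h with ⟨h1, h2⟩ | ⟨h1, h2⟩
    · exact Prod.ext (Sum.inl.inj h1) (Sum.inr.inj h2)
    · exact absurd h1 (by simp)
  have hcard2 : E.card = P.card := Finset.card_image_of_injOn hinj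
  have hcard3 : P.card = ∑ a, (S a).card := by
    rw [Finset.card_eq_sum_card_fiberwise (f := Prod.fst) (t := univ) (fun x _ => mem_univ _)]
    refine Finset.sum_congr rfl fun a _ => ?_
    apply Finset.card_bij (i := fun x _ => x.2)
    · intro x hx
      rw [mem_filter] at hx
      obtain ⟨hxP, hx1⟩ := hx
      rw [hP, mem_filter] at hxP
      rw [hmemS]
      rw [← hx1]
      exact hxP.2
    · intro x hx y hy hxy
      rw [mem_filter] at hx hy
      exact Prod.ext (hx.2.trans hy.2.symm) hxy
    · intro b hb
      refine ⟨(a, b), ?_, rfl⟩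
      rw [mem_filter, hP, mem_filter]
      exact ⟨⟨mem_univ _, (hmemS _ _).mp hb⟩, rfl⟩
  have hle := GyoriCore.core_bound S hRTF
  rw [Fintype.card_fin, Fintype.card_fin] at hle
  have hfinal : G.edgeSet.ncard ≤ 2 * u + v.choose 2 := by
    rw [hcard1, hcard2, hcard3]; exact hle
  have hch : ((v.choose 2 : ℕ) : ℝ) = (v : ℝ) * ((v : ℝ) - 1) / 2 := Nat.cast_choose_two ℝ v
  have hv1 : (1 : ℝ) ≤ (v : ℝ) := by exact_mod_cast hv
  calc (G.edgeSet.ncard : ℝ) ≤ ((2 * u + v.choose 2 : ℕ) : ℝ) := by exact_mod_cast hfinal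
    _ = 2 * (u : ℝ) + (v : ℝ) * ((v : ℝ) - 1) / 2 := by push_cast [hch]; ring
    _ < 2 * (u : ℝ) + (v : ℝ) ^ 2 / 2 := by nlinarith
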